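/- Let a, b ∈ ℂ and c ∈ ℂ with c ≠ 0. The ℂ-bilinear product ∘ on A defined on basis elements by L_m∘L_n = cL_{m+n+1} − (n+1)L_{m+n}, L_m∘W_n = ((a−1)(m+1)−(n+1))W_{m+n} + (b+c)W_{m+n+1}, W_m∘L_n = cW_{m+n+1} and W_m∘W_n = 0 is left-symmetric, and it is a compatible left-symmetric algebraic structure on the Lie algebra Coeff(W(a,b)). -/

import Mathlib

noncomputable section

/-- `A` is the free `ℂ`-vector space with basis `{L m : m ∈ ℤ} ∪ {W m : m ∈ ℤ}`. -/
abbrev A : Type := (ℤ ⊕ ℤ) →₀ ℂ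

/-- The basis vector `L m`. -/
def L (m : ℤ) : A := Finsupp.single (Sum.inl m) 1

/-- The basis vector `W m`. -/
def W (m : ℤ) : A := Finsupp.single (Sum.inr m) 1

/-- Corollary 3.8 (2), with `c ≠ 0`. -/
theorem stmt13 (a b c : ℂ) (hc : c ≠ 0)
    -- `M` is the ℂ-bilinear product `∘` given on basis elements by:
    (M : A →ₗ[ℂ] A →ₗ[ℂ] A)
    (hLL : ∀ m n : ℤ, M (L m) (L n) = c • L (m + n + 1) - ((n : ℂ) + 1) • L (m + n))
    (hLW : ∀ m n : ℤ, M (L m) (W n) =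
      ((a - 1) * ((m : ℂ) + 1) - ((n : ℂ) + 1)) • W (m + n) + (b + c) • W (m + n + 1))
    (hWL : ∀ m n : ℤ, M (W m) (L n) = c • W (m + n + 1))
    (hWW : ∀ m n : ℤ, M (W m) (W n) = 0)
    -- `B` is the ℂ-bilinear Lie bracket of Coeff(W(a,b)) on basis elements:
    (B : A →ₗ[ℂ] A →ₗ[ℂ] A)
    (hBLL : ∀ m n : ℤ, B (L m) (L n) = ((m : ℂ) - (n : ℂ)) • L (m + n))
    (hBLW : ∀ m n : ℤ, B (L m) (W n) =
      (((m : ℂ) + 1) * (a - 1) - ((n : ℂ) + 1)) • W (m + n)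
        + b • W (m + n + 1))
    (hBWL : ∀ m n : ℤ, B (W n) (L m) = -B (L m) (W n))
    (hBWW : ∀ m n : ℤ, B (W m) (W n) = 0) :
    -- `∘ = M` is left-symmetric:
    ((∀ x y z : A, M (M x y) z - M x (M y z) = M (M y x) z - M y (M x z)) ∧
    (∀ x y : A, M x y - M y x = B x y)) := by
  have hsingle : ∀ (i : ℤ ⊕ ℤ) (t : ℂ),
      Finsupp.single i t = t • Finsupp.single i (1 : ℂ) := by
    intro i t; rw [Finsupp.smul_single, smul_eq_mul, mul_one]
  have base1 : ∀ i j k : ℤ ⊕ ℤ,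
      M (M (Finsupp.single i 1) (Finsupp.single j 1)) (Finsupp.single k 1)
        - M (Finsupp.single i 1) (M (Finsupp.single j 1) (Finsupp.single k 1))
      = M (M (Finsupp.single j 1) (Finsupp.single i 1)) (Finsupp.single k 1)
        - M (Finsupp.single j 1) (M (Finsupp.single i 1) (Finsupp.single k 1)) := by
    rintro (m|m) (n|n) (k|k) <;>
      simp only [show ∀ m:ℤ, Finsupp.single (Sum.inl m) (1:ℂ) = L m from fun _ => rfl,
        show ∀ m:ℤ, Finsupp.single (Sum.inr m) (1:ℂ) = W m from fun _ => rfl] <;>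
      simp only [hLL, hLW, hWL, hWW, map_sub, map_add, map_smul, map_zero,
        LinearMap.sub_apply, LinearMap.add_apply, LinearMap.smul_apply, LinearMap.zero_apply,
        smul_sub, smul_add, smul_smul, sub_zero, zero_sub, smul_zero, neg_zero] <;>
      push_cast <;> (try ring_nf) <;> module
  have base2 : ∀ i j : ℤ ⊕ ℤ,
      M (Finsupp.single i 1) (Finsupp.single j 1)
        - M (Finsupp.single j 1) (Finsupp.single i 1)
      = B (Finsupp.single i 1) (Finsupp.single j 1) := by
    rintro (m|m) (n|n) <;>
      simp only [show ∀ m:ℤ, Finsupp.single (Sum.inl m) (1:ℂ) = L m from fun _ => rfl,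
        show ∀ m:ℤ, Finsupp.single (Sum.inr m) (1:ℂ) = W m from fun _ => rfl] <;>
      simp only [hLL, hLW, hWL, hWW, hBLL, hBLW, hBWL, hBWW, sub_zero, sub_self] <;>
      push_cast <;> ring_nf <;> module
  constructor
  · intro x y z
    induction x using Finsupp.induction_linear with
    | zero => simp
    | add f g hf hg =>
        simp only [map_add, LinearMap.add_apply, ← sub_add_sub_comm, hf, hg]
    | single i t =>
      induction y using Finsupp.induction_linear with
      | zero => simp
      | add f g hf hg =>
          simp only [map_add, LinearMap.add_apply, ← sub_add_sub_comm, hf, hg]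
      | single j s =>
        induction z using Finsupp.induction_linear with
        | zero => simp
        | add f g hf hg =>
            simp only [map_add, LinearMap.add_apply, ← sub_add_sub_comm, hf, hg]
        | single k u =>
            rw [hsingle i t, hsingle j s, hsingle k u]
            simp only [map_smul, LinearMap.smul_apply, smul_smul]
            rw [show u * (s * t) = u * s * t from by ring,
              show u * (t * s) = u * t * s from by ring,
              show u * t * s = u * s * t from by ring,
              ← smul_sub, ← smul_sub, base1]
  · intro x y
    induction x using Finsupp.induction_linear with
    | zero => simp
    | add f g hf hg =>
        simp only [map_add, LinearMap.add_apply, ← sub_add_sub_comm, hf, hg]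
    | single i t =>
      induction y using Finsupp.induction_linear with
      | zero => simp
      | add f g hf hg =>
          simp only [map_add, LinearMap.add_apply, ← sub_add_sub_comm, hf, hg]
      | single j s =>
          rw [hsingle i t, hsingle j s]
          simp only [map_smul, LinearMap.smul_apply, smul_smul]
          rw [show s * t = t * s from by ring]
          rw [← smul_sub, base2]

end
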